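/- Let p ≥ 7 be a prime, q ≥ 1, n ∈ ℕ, and let u = (1, σ) ∈ ℤⁿ where σ ∈ {2,3}^{n−1} satisfies ∑ᵢ σᵢ^q = p^q − 1 and, for all integers k ≢ 0, ±1 (mod p), ∑ᵢ |k·σᵢ|_p^q + |k|_p^q > p^q − 1 + 1 = p^q. Let L₊ ⊂ ℝⁿ be the lattice generated by p·e₁, ..., p·eₙ and u. Then every nonzero vector of L₊ has ℓ^q norm at least p, and the only vectors of ℓ^q norm exactly p in L₊ are ±p·e₁, ..., ±p·eₙ, and ±u. -/

import Mathlib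

/-- `|x|_m`, the distance of `x` from the scaled grid `mℤ`. -/
noncomputable def modAbs (m x : ℝ) : ℝ := sInf (Set.range fun z : ℤ => |x - m * z|)

/-- The `ℓ^q` norm of a vector in `ℝⁿ`. -/
noncomputable def lqNorm (q : ℕ) {n : ℕ} (x : Fin n → ℝ) : ℝ :=
  (∑ i, |x i| ^ q) ^ ((1 : ℝ) / q)

lemma modAbs_nonneg (m x : ℝ) : 0 ≤ modAbs m x :=
  le_csInf (Set.range_nonempty _) (by rintro b ⟨z, rfl⟩; exact abs_nonneg _)

lemma modAbs_le (m x : ℝ) (z : ℤ) : modAbs m x ≤ |x - m * z| :=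
  csInf_le ⟨0, by rintro b ⟨w, rfl⟩; exact abs_nonneg _⟩ ⟨z, rfl⟩

theorem lattice_plus_shortest_vectors (p q n : ℕ) (hp : p.Prime) (hp7 : 7 ≤ p)
    (hq : 1 ≤ q) (σ : Fin n → ℤ) (hσ : ∀ i, σ i = 2 ∨ σ i = 3)
    (hsum : ∑ i, (σ i) ^ q = (p : ℤ) ^ q - 1)
    (hk : ∀ k : ℤ, ¬ (p : ℤ) ∣ k → ¬ (p : ℤ) ∣ k - 1 → ¬ (p : ℤ) ∣ k + 1 →
      (∑ i, modAbs p ((k * σ i : ℤ) : ℝ) ^ q) + modAbs p (k : ℝ) ^ q > (p : ℝ) ^ q) :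
    ∀ u : Fin (n + 1) → ℝ, u = Fin.cons 1 (fun i => (σ i : ℝ)) →
    ∀ L : Submodule ℤ (Fin (n + 1) → ℝ),
      L = Submodule.span ℤ
        ((Set.range fun i : Fin (n + 1) => (p : ℝ) • (Pi.single i 1 : Fin (n + 1) → ℝ)) ∪ {u}) →
      (∀ x ∈ L, x ≠ 0 → (p : ℝ) ≤ lqNorm q x) ∧
      (∀ x ∈ L, (lqNorm q x = p ↔
        (∃ i : Fin (n + 1),
          x = (p : ℝ) • (Pi.single i 1 : Fin (n + 1) → ℝ) ∨ x = -((p : ℝ) • (Pi.single i 1 : Fin (n + 1) → ℝ))) ∨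
        x = u ∨ x = -u)) := by
  intro u hu L hL
  have hq0 : q ≠ 0 := by omega
  have hqR : (q:ℝ) ≠ 0 := by positivity
  have hpR : (0:ℝ) < p := by
    have : 0 < p := by omega
    exact_mod_cast this
  -- the integer version of u
  set ν : Fin (n+1) → ℤ := Fin.cons 1 σ with hν
  have hνu : ∀ i, ((ν i : ℤ) : ℝ) = u i := by
    intro i
    refine Fin.cases ?_ (fun j => ?_) i <;> simp [hu, hν]
  have hν1 : ∀ i, 1 ≤ ν i := by
    intro i
    refine Fin.cases ?_ (fun j => ?_) i <;> simp [hν]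
    rcases hσ j with h | h <;> omega
  have hν3 : ∀ i, ν i ≤ 3 := by
    intro i
    refine Fin.cases ?_ (fun j => ?_) i <;> simp [hν]
    rcases hσ j with h | h <;> omega
  have hνsumZ : ∑ i, (ν i)^q = (p:ℤ)^q := by
    rw [Fin.sum_univ_succ]
    simp only [hν, Fin.cons_zero, Fin.cons_succ, one_pow]
    rw [hsum]; ring
  have hνsum : ∑ i, ((ν i : ℤ):ℝ)^q = (p:ℝ)^q := by
    exact_mod_cast congrArg (fun t : ℤ => (t : ℝ)) hνsumZ
  -- coordinate lower bound for the ±u case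
  have coordZ : ∀ e a w : ℤ, |e| = 1 → 1 ≤ a → a ≤ 3 →
      a ≤ |e*a + (p:ℤ)*w| ∧ (w ≠ 0 → a < |e*a + (p:ℤ)*w|) := by
    intro e a w he h1 h3
    have hea : |e*a| = a := by rw [abs_mul, he, one_mul, abs_of_nonneg (by omega)]
    rcases eq_or_ne w 0 with rfl | hw
    · simp [hea]
    · have hw1 : (1:ℤ) ≤ |w| := Int.one_le_abs hw
      have hp7' : (7:ℤ) ≤ (p:ℤ) := by exact_mod_cast hp7
      have hpw : (7:ℤ) ≤ |(p:ℤ)*w| := by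
        rw [abs_mul, abs_of_nonneg (by positivity : (0:ℤ) ≤ (p:ℤ))]
        nlinarith
      have htri : |(p:ℤ)*w| - |e*a| ≤ |(p:ℤ)*w - -(e*a)| := by
        calc |(p:ℤ)*w| - |e*a| = |(p:ℤ)*w| - |-(e*a)| := by rw [abs_neg]
          _ ≤ |(p:ℤ)*w - -(e*a)| := abs_sub_abs_le_abs_sub _ _
      have heq : (p:ℤ)*w - -(e*a) = e*a + (p:ℤ)*w := by ring
      rw [heq] at htri
      have : a < |e*a + (p:ℤ)*w| := by omega
      exact ⟨this.le, fun _ => this⟩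
  -- representation of lattice elements
  have hrep : ∀ x ∈ L, ∃ (k : ℤ) (z : Fin (n+1) → ℤ),
      ∀ i, x i = (k:ℝ) * u i + (p:ℝ) * (z i : ℤ) := by
    intro x hx
    rw [hL] at hx
    induction hx using Submodule.span_induction with
    | mem y hy =>
        rcases hy with ⟨i, rfl⟩ | rfl
        · refine ⟨0, Pi.single i 1, fun j => ?_⟩
          simp only [Pi.smul_apply, smul_eq_mul, Int.cast_zero, zero_mul, zero_add]
          rcases eq_or_ne j i with rfl | hji
          · simp
          · simp [Pi.single_eq_of_ne hji]
        · exact ⟨1, 0, fun j => by simp⟩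
    | zero => exact ⟨0, 0, fun j => by simp⟩
    | add a b _ _ ha hb =>
        obtain ⟨k1, z1, h1⟩ := ha
        obtain ⟨k2, z2, h2⟩ := hb
        refine ⟨k1 + k2, z1 + z2, fun i => ?_⟩
        simp only [Pi.add_apply, h1 i, h2 i]
        push_cast; ring
    | smul c a _ ha =>
        obtain ⟨k1, z1, h1⟩ := ha
        refine ⟨c * k1, c • z1, fun i => ?_⟩
        simp only [Pi.smul_apply, h1 i, zsmul_eq_mul]
        push_cast; ring
  -- master lemma
  have master : ∀ (k : ℤ) (z : Fin (n+1) → ℤ) (x : Fin (n+1) → ℝ),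
      (∀ i, x i = (k:ℝ) * u i + (p:ℝ) * (z i : ℤ)) →
      ((x ≠ 0 → (p:ℝ)^q ≤ ∑ i, |x i|^q) ∧
       ((∑ i, |x i|^q) = (p:ℝ)^q →
         (∃ i : Fin (n+1), x = (p:ℝ) • (Pi.single i 1 : Fin (n+1) → ℝ) ∨
            x = -((p:ℝ) • (Pi.single i 1 : Fin (n+1) → ℝ))) ∨ x = u ∨ x = -u)) := by
    intro k z x hx
    have unitCase : ∀ e m : ℤ, |e| = 1 → k = e + (p:ℤ) * m →
        ((x ≠ 0 → (p:ℝ)^q ≤ ∑ i, |x i|^q) ∧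
         ((∑ i, |x i|^q) = (p:ℝ)^q →
           (∃ i : Fin (n+1), x = (p:ℝ) • (Pi.single i 1 : Fin (n+1) → ℝ) ∨
              x = -((p:ℝ) • (Pi.single i 1 : Fin (n+1) → ℝ))) ∨ x = u ∨ x = -u)) := by
      intro e m he hkm
      set w : Fin (n+1) → ℤ := fun i => m * ν i + z i with hw
      have hxw : ∀ i, x i = ((e * ν i + (p:ℤ) * w i : ℤ) : ℝ) := by
        intro i
        rw [hx i, ← hνu i, hkm, hw]
        push_cast; ring
      have hterm : ∀ i, ((ν i : ℤ):ℝ)^q ≤ |x i|^q := by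
        intro i
        have h1 := (coordZ e (ν i) (w i) he (hν1 i) (hν3 i)).1
        have h2 : ((ν i : ℤ):ℝ) ≤ |x i| := by
          rw [hxw i, ← Int.cast_abs]
          exact_mod_cast h1
        have hn0 : (0:ℝ) ≤ ((ν i : ℤ):ℝ) := by
          exact_mod_cast le_trans zero_le_one (hν1 i)
        exact pow_le_pow_left₀ hn0 h2 q
      constructor
      · intro _
        rw [← hνsum]
        exact Finset.sum_le_sum fun i _ => hterm i
      · intro hEq
        have hw0 : ∀ i, w i = 0 := by
          by_contra hc
          push_neg at hc
          obtain ⟨i, hi⟩ := hc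
          have hs := (coordZ e (ν i) (w i) he (hν1 i) (hν3 i)).2 hi
          have hstrict : ((ν i : ℤ):ℝ)^q < |x i|^q := by
            have h2 : ((ν i : ℤ):ℝ) < |x i| := by
              rw [hxw i, ← Int.cast_abs]
              exact_mod_cast hs
            refine pow_lt_pow_left₀ h2 ?_ hq0
            exact_mod_cast le_trans zero_le_one (hν1 i)
          have hlt : ∑ i, ((ν i : ℤ):ℝ)^q < ∑ i, |x i|^q :=
            Finset.sum_lt_sum (fun j _ => hterm j) ⟨i, Finset.mem_univ i, hstrict⟩
          rw [hνsum, hEq] at hlt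
          exact lt_irrefl _ hlt
        right
        have hxν : ∀ i, x i = (e:ℝ) * u i := by
          intro i
          rw [hxw i, hw0 i, ← hνu i]
          push_cast; ring
        rcases (abs_eq (by norm_num : (0:ℤ) ≤ 1)).1 he with rfl | rfl
        · left; funext i; rw [hxν i]; push_cast; ring
        · right; funext i; rw [Pi.neg_apply, hxν i]; push_cast; ring
    by_cases h0 : (p:ℤ) ∣ k
    · obtain ⟨m, rfl⟩ := h0
      set c : Fin (n+1) → ℤ := fun i => m * ν i + z i with hc
      have hxc : ∀ i, x i = (p:ℝ) * ((c i : ℤ) : ℝ) := by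
        intro i
        rw [hx i, ← hνu i, hc]
        push_cast; ring
      have habs : ∀ i, |x i| = (p:ℝ) * ((|c i| : ℤ) : ℝ) := by
        intro i
        rw [hxc i, abs_mul, abs_of_pos hpR, Int.cast_abs]
      have hsumc : ∑ i, |x i|^q = (p:ℝ)^q * ((∑ i, |c i|^q : ℤ) : ℝ) := by
        push_cast
        rw [Finset.mul_sum]
        exact Finset.sum_congr rfl fun i _ => by rw [habs i, mul_pow]; push_cast; ring
      have honele : ∀ i, c i ≠ 0 → (1:ℤ) ≤ |c i|^q := by
        intro i hi
        calc (1:ℤ) = 1^q := (one_pow q).symm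
          _ ≤ |c i|^q := pow_le_pow_left₀ (by norm_num) (Int.one_le_abs hi) q
      have hsle : ∀ i, |c i|^q ≤ ∑ j, |c j|^q :=
        fun i => Finset.single_le_sum (f := fun j => |c j|^q)
          (fun j _ => pow_nonneg (abs_nonneg _) q) (Finset.mem_univ i)
      constructor
      · intro hx0
        have hex : ∃ i, c i ≠ 0 := by
          by_contra hcon
          push_neg at hcon
          exact hx0 (funext fun i => by rw [hxc i, hcon i]; simp)
        obtain ⟨i, hi⟩ := hex
        have hS1 : (1:ℤ) ≤ ∑ j, |c j|^q := le_trans (honele i hi) (hsle i)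
        rw [hsumc]
        have hS1R : (1:ℝ) ≤ ((∑ j, |c j|^q : ℤ):ℝ) := by exact_mod_cast hS1
        nlinarith [pow_pos hpR q]
      · intro hEq
        rw [hsumc] at hEq
        have hppos : (0:ℝ) < (p:ℝ)^q := pow_pos hpR q
        have hS : ((∑ j, |c j|^q : ℤ):ℝ) = 1 :=
          mul_left_cancel₀ (ne_of_gt hppos) (by rw [hEq, mul_one])
        have hSZ : (∑ j, |c j|^q : ℤ) = 1 := by exact_mod_cast hS
        have hex : ∃ i, c i ≠ 0 := by
          by_contra hcon
          push_neg at hcon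
          simp [hcon, zero_pow hq0] at hSZ
        obtain ⟨i, hi⟩ := hex
        have hti : |c i|^q = 1 := le_antisymm (hSZ ▸ hsle i) (honele i hi)
        have hci : |c i| = 1 := by
          by_contra hcc
          have h2 : 2 ≤ |c i| := by
            have := Int.one_le_abs hi; omega
          have h3 : (2:ℤ) ≤ |c i|^q := by
            calc (2:ℤ) ≤ 2^q := le_self_pow₀ (by norm_num) hq0
              _ ≤ |c i|^q := pow_le_pow_left₀ (by norm_num) h2 q
          omega
        have hrest : ∀ j, j ≠ i → c j = 0 := by
          intro j hj
          have hsplit := Finset.add_sum_erase Finset.univ (fun l => |c l|^q)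
            (Finset.mem_univ i)
          have hz : ∑ l ∈ Finset.univ.erase i, |c l|^q = 0 := by
            linarith [hsplit, hSZ, hti]
          have hj' : |c j|^q = 0 :=
            (Finset.sum_eq_zero_iff_of_nonneg
              (fun l _ => pow_nonneg (abs_nonneg _) q)).1 hz j
              (Finset.mem_erase.2 ⟨hj, Finset.mem_univ j⟩)
          exact abs_eq_zero.1 ((pow_eq_zero_iff hq0).1 hj')
        left
        refine ⟨i, ?_⟩
        rcases (abs_eq (by norm_num : (0:ℤ) ≤ 1)).1 hci with hv | hv
        · left; funext j
          rcases eq_or_ne j i with rfl | hji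
          · rw [hxc j, hv]; simp
          · rw [hxc j, hrest j hji]; simp [Pi.single_eq_of_ne hji]
        · right; funext j
          rcases eq_or_ne j i with rfl | hji
          · rw [hxc j, hv]; simp
          · rw [hxc j, hrest j hji]; simp [Pi.single_eq_of_ne hji]
    · by_cases h1 : (p:ℤ) ∣ k - 1
      · obtain ⟨m, hm⟩ := h1
        exact unitCase 1 m (by norm_num) (by linarith)
      · by_cases hm1 : (p:ℤ) ∣ k + 1
        · obtain ⟨m, hm⟩ := hm1
          exact unitCase (-1) m (by norm_num) (by linarith)
        · -- generic k : use hk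
          have hbig := hk k h0 h1 hm1
          have hA : (∑ i : Fin n, modAbs p ((k * σ i : ℤ) : ℝ) ^ q) + modAbs p (k:ℝ) ^ q
              ≤ ∑ i, |x i|^q := by
            rw [Fin.sum_univ_succ (f := fun i => |x i|^q)]
            have h0' : modAbs p (k:ℝ) ^ q ≤ |x 0|^q := by
              refine pow_le_pow_left₀ (modAbs_nonneg _ _) ?_ q
              have := modAbs_le (p:ℝ) (k:ℝ) (-(z 0))
              have hx0 : x 0 = (k:ℝ) - (p:ℝ) * ((-(z 0) : ℤ) : ℝ) := by
                rw [hx 0, hu]; push_cast [Fin.cons_zero]; ring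
              rw [← hx0] at this
              exact this
            have hs : ∀ i : Fin n, modAbs p ((k * σ i : ℤ):ℝ) ^ q ≤ |x i.succ|^q := by
              intro i
              refine pow_le_pow_left₀ (modAbs_nonneg _ _) ?_ q
              have := modAbs_le (p:ℝ) ((k * σ i : ℤ):ℝ) (-(z i.succ))
              have hxi : x i.succ = ((k * σ i : ℤ):ℝ) - (p:ℝ) * ((-(z i.succ) : ℤ) : ℝ) := by
                rw [hx i.succ, hu]; push_cast [Fin.cons_succ]; ring
              rw [← hxi] at this
              exact this
            have := Finset.sum_le_sum fun i (_ : i ∈ Finset.univ) => hs i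
            linarith
          exact ⟨fun _ => by linarith, fun hEq => absurd hEq (by linarith)⟩
  -- norm translation
  have hlq : ∀ x : Fin (n+1) → ℝ,
      (lqNorm q x = p ↔ (∑ i, |x i|^q) = (p:ℝ)^q) ∧
      ((p:ℝ)^q ≤ (∑ i, |x i|^q) → (p:ℝ) ≤ lqNorm q x) := by
    intro x
    have hA : (0:ℝ) ≤ ∑ i, |x i|^q :=
      Finset.sum_nonneg fun i _ => pow_nonneg (abs_nonneg _) q
    have key : ((∑ i, |x i|^q) ^ ((1:ℝ)/q)) ^ q = ∑ i, |x i|^q := by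
      rw [← Real.rpow_natCast ((∑ i, |x i|^q) ^ ((1:ℝ)/q)) q, ← Real.rpow_mul hA, one_div,
        inv_mul_cancel₀ hqR, Real.rpow_one]
    have hpq : ((p:ℝ)^q) ^ ((1:ℝ)/q) = p := by
      rw [← Real.rpow_natCast (p:ℝ) q, ← Real.rpow_mul hpR.le, one_div,
        mul_inv_cancel₀ hqR, Real.rpow_one]
    refine ⟨⟨fun h => ?_, fun h => ?_⟩, fun h => ?_⟩
    · rw [← key]; unfold lqNorm at h; rw [h]
    · unfold lqNorm; rw [h, hpq]
    · unfold lqNorm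
      calc (p:ℝ) = ((p:ℝ)^q) ^ ((1:ℝ)/q) := hpq.symm
        _ ≤ (∑ i, |x i|^q) ^ ((1:ℝ)/q) := Real.rpow_le_rpow (by positivity) h (by positivity)
  -- the backward direction computations
  have hsingle : ∀ i : Fin (n+1),
      ∑ j, |((p:ℝ) • (Pi.single i 1 : Fin (n+1) → ℝ)) j|^q = (p:ℝ)^q := by
    intro i
    rw [Finset.sum_eq_single i]
    · simp [abs_of_pos hpR]
    · intro j _ hji
      simp [Pi.single_eq_of_ne hji, zero_pow hq0]
    · simp
  have husum : ∑ j, |u j|^q = (p:ℝ)^q := by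
    rw [← hνsum]
    refine Finset.sum_congr rfl fun j _ => ?_
    rw [← hνu j, ← Int.cast_abs, abs_of_nonneg (le_trans zero_le_one (hν1 j))]
  constructor
  · intro x hxL hx0
    obtain ⟨k, z, hxr⟩ := hrep x hxL
    exact (hlq x).2 ((master k z x hxr).1 hx0)
  · intro x hxL
    obtain ⟨k, z, hxr⟩ := hrep x hxL
    rw [(hlq x).1]
    constructor
    · exact (master k z x hxr).2
    · rintro (⟨i, rfl | rfl⟩ | rfl | rfl)
      · exact hsingle i
      · simpa using hsingle i
      · exact husum
      · simpa using husum
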